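/- Let a₁,…,a_N (N ≥ 2) be vectors in a complex inner product space. Then ∑_{s=1}^{N} ‖a_s‖² ≥ (1/N) [ ‖∑_{s=1}^{N} a_s‖² + (2/(N(N−1))) ( ∑_{1≤s<t≤N} ‖a_s − a_t‖ )² ]. -/

import Mathlib

open Finset

set_option maxHeartbeats 1000000 in
theorem stmt_17 {E : Type*} [NormedAddCommGroup E] [InnerProductSpace ℂ E]
    {N : ℕ} (hN : 2 ≤ N) (a : Fin N → E) :
    ∑ s, ‖a s‖ ^ 2 ≥
      (1 / (N : ℝ)) *
        (‖∑ s, a s‖ ^ 2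
          + (2 / ((N : ℝ) * ((N : ℝ) - 1))) *
            (∑ s : Fin N, ∑ t ∈ Finset.Ioi s, ‖a s - a t‖) ^ 2) := by
  have hNR : (2:ℝ) ≤ (N:ℝ) := by exact_mod_cast hN
  have hN0 : (0:ℝ) < (N:ℝ) := by linarith
  have hN1 : (0:ℝ) < (N:ℝ) - 1 := by linarith
  set S : ℝ := ∑ s : Fin N, ∑ t ∈ Finset.Ioi s, ‖a s - a t‖ with hS
  set Q : ℝ := ∑ s : Fin N, ∑ t ∈ Finset.Ioi s, ‖a s - a t‖ ^ 2 with hQ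
  -- full double sum expansion
  have hfull : ∑ s : Fin N, ∑ t : Fin N, ‖a s - a t‖ ^ 2
      = 2 * ((N:ℝ) * ∑ s, ‖a s‖ ^ 2) - 2 * ‖∑ s, a s‖ ^ 2 := by
    have hns : ‖∑ s, a s‖ ^ 2
        = ∑ s : Fin N, ∑ t : Fin N, RCLike.re (inner ℂ (a s) (a t)) := by
      rw [@norm_sq_eq_re_inner ℂ, sum_inner, map_sum]
      refine Finset.sum_congr rfl fun s _ => ?_
      rw [inner_sum, map_sum]
    have hexp : ∀ s t : Fin N, ‖a s - a t‖ ^ 2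
        = ‖a s‖ ^ 2 + ‖a t‖ ^ 2 - 2 * RCLike.re (inner ℂ (a s) (a t)) := by
      intro s t
      rw [@norm_sub_sq ℂ]; ring
    have hinner : ∑ s : Fin N, ∑ t : Fin N,
        ‖a s - a t‖ ^ 2
        = ∑ s : Fin N, ((N:ℝ) * ‖a s‖ ^ 2 + (∑ t, ‖a t‖ ^ 2)
            - 2 * ∑ t : Fin N, RCLike.re (inner ℂ (a s) (a t))) := by
      refine Finset.sum_congr rfl fun s _ => ?_
      simp_rw [hexp]
      rw [Finset.sum_sub_distrib, Finset.sum_add_distrib, Finset.sum_const,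
        Finset.card_univ, Fintype.card_fin, nsmul_eq_mul, ← Finset.mul_sum]
    rw [hinner, Finset.sum_sub_distrib, Finset.sum_add_distrib, Finset.sum_const,
      Finset.card_univ, Fintype.card_fin, nsmul_eq_mul, ← Finset.mul_sum,
      ← Finset.mul_sum, ← hns]
    ring
  -- halving by symmetry
  have hhalf : 2 * Q = ∑ s : Fin N, ∑ t : Fin N, ‖a s - a t‖ ^ 2 := by
    have h1 := Finset.sum_sum_Ioi_add_eq_sum_sum_off_diag
      (fun s t : Fin N => ‖a s - a t‖ ^ 2)
    have h2 : ∑ s : Fin N, ∑ t ∈ ({s}ᶜ : Finset (Fin N)), ‖a t - a s‖ ^ 2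
        = ∑ s : Fin N, ∑ t : Fin N, ‖a s - a t‖ ^ 2 := by
      rw [Finset.sum_comm (f := fun s t => ‖a s - a t‖ ^ 2)]
      refine Finset.sum_congr rfl fun s _ => ?_
      rw [← Finset.sum_compl_add_sum ({s} : Finset (Fin N))
        (f := fun t => ‖a t - a s‖ ^ 2)]
      simp
    have h3 : ∀ s t : Fin N, ‖a t - a s‖ ^ 2 = ‖a s - a t‖ ^ 2 := by
      intro s t; rw [norm_sub_rev]
    calc 2 * Q = ∑ s : Fin N, ∑ t ∈ Finset.Ioi s, (‖a t - a s‖ ^ 2 + ‖a s - a t‖ ^ 2) := by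
          simp_rw [h3, Finset.sum_add_distrib]; rw [hQ]; ring
      _ = ∑ s : Fin N, ∑ t ∈ ({s}ᶜ : Finset (Fin N)), ‖a t - a s‖ ^ 2 := by
          convert h1 using 3
      _ = _ := h2
  have key : (N:ℝ) * ∑ s, ‖a s‖ ^ 2 = ‖∑ s, a s‖ ^ 2 + Q := by
    have := hhalf.trans hfull; linarith
  -- Cauchy-Schwarz
  have hcardsig : ((Finset.univ.sigma fun s : Fin N => Finset.Ioi s).card : ℝ)
      = (N:ℝ) * ((N:ℝ) - 1) / 2 := by
    rw [Finset.card_sigma]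
    have hc : ∀ s : Fin N, (Finset.Ioi s).card = N - 1 - (s : ℕ) := fun s => Fin.card_Ioi s
    simp_rw [hc]
    have e1 : ∑ s : Fin N, (N - 1 - (s : ℕ)) = ∑ i ∈ Finset.range N, (N - 1 - i) := by
      rw [Fin.sum_univ_eq_sum_range]
    rw [e1, Finset.sum_range_reflect (fun i => i) N]
    have h2 := Finset.sum_range_id_mul_two N
    have e3 : (((∑ i ∈ Finset.range N, i) * 2 : ℕ) : ℝ) = ((N * (N-1) : ℕ) : ℝ) := by
      exact_mod_cast congrArg (Nat.cast : ℕ → ℝ) h2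
    have hN1n : (1:ℕ) ≤ N := by omega
    push_cast [Nat.cast_sub hN1n] at e3 ⊢
    linarith
  have hcs : S ^ 2 ≤ ((N:ℝ) * ((N:ℝ) - 1) / 2) * Q := by
    have h := sq_sum_le_card_mul_sum_sq
      (s := Finset.univ.sigma fun s : Fin N => Finset.Ioi s)
      (f := fun p : Σ _ : Fin N, Fin N => ‖a p.1 - a p.2‖)
    rw [hcardsig] at h
    have eS : S = ∑ p ∈ Finset.univ.sigma (fun s : Fin N => Finset.Ioi s),
        ‖a p.1 - a p.2‖ :=
      Finset.sum_sigma' _ _ _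
    have eQ : Q = ∑ p ∈ Finset.univ.sigma (fun s : Fin N => Finset.Ioi s),
        ‖a p.1 - a p.2‖ ^ 2 :=
      Finset.sum_sigma' _ _ _
    rw [eS, eQ]
    exact h
  -- conclude
  rw [ge_iff_le, div_mul_eq_mul_div, div_le_iff₀ hN0, one_mul]
  have hprod : (0:ℝ) < (N:ℝ) * ((N:ℝ) - 1) := by positivity
  have h2 : (2 / ((N:ℝ) * ((N:ℝ) - 1))) * S ^ 2 ≤ Q := by
    rw [div_mul_eq_mul_div, div_le_iff₀ hprod]
    nlinarith [hcs]
  calc ‖∑ s, a s‖ ^ 2 + (2 / ((N:ℝ) * ((N:ℝ) - 1))) * S ^ 2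
      ≤ ‖∑ s, a s‖ ^ 2 + Q := by linarith
    _ = (N:ℝ) * ∑ s, ‖a s‖ ^ 2 := key.symm
    _ = (∑ s, ‖a s‖ ^ 2) * (N:ℝ) := by ring
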